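/- arXiv:1901.02933 — 4 statements merged into one kernel-verified Lean document; each statement's English description precedes it below -/
import Mathlib

section
/- Let G = (V, E) be a finite undirected graph and let λ̂ be in the matching polytope of G. Let G̃ and λ̃ be the doubled graph and weights as constructed (two copies of G joined by edges (v, v') of weight 1 - λ̂(δ_G(v)), copies of edges keeping their weights). Then for every subset S ⊆ V(G̃) with |S| odd, λ̃(δ_{G̃}(S)) ≥ 1; i.e., λ̃ lies in the perfect matching polytope of G̃. -/
open Finset

/-- Edges of `E` incident to vertex `v` (the set `δ(v)`). -/
def edgesInc {V : Type*} [Fintype V] [DecidableEq V] (E : Finset (Sym2 V)) (v : V) :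
    Finset (Sym2 V) :=
  E.filter (fun e => v ∈ e)

/-- Edges of `E` with exactly one endpoint in `S` (the cut-set `δ(S)`). -/
def edgesCut {V : Type*} [Fintype V] [DecidableEq V] (E : Finset (Sym2 V)) (S : Finset V) :
    Finset (Sym2 V) :=
  E.filter (fun e => ∃ a b : V, e = s(a, b) ∧ a ∈ S ∧ b ∉ S)

/-- Edges of `E` with both endpoints in `S` (the set `E(S)`). -/
def edgesIn {V : Type*} [Fintype V] [DecidableEq V] (E : Finset (Sym2 V)) (S : Finset V) :
    Finset (Sym2 V) :=
  E.filter (fun e => ∀ a ∈ e, a ∈ S)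

/-- Total weight of a finite set of edges. -/
def wSum {V : Type*} (w : Sym2 V → ℝ) (F : Finset (Sym2 V)) : ℝ :=
  ∑ e ∈ F, w e

/-- The doubled graph `G̃`: two copies of the edge set of `G` plus an edge `(v, v')`
joining each vertex to its copy. -/
def doubledEdges {V : Type*} [Fintype V] [DecidableEq V] (E : Finset (Sym2 V)) :
    Finset (Sym2 (V ⊕ V)) :=
  E.image (Sym2.map Sum.inl) ∪ E.image (Sym2.map Sum.inr) ∪
    Finset.univ.image (fun v : V => s(Sum.inl v, Sum.inr v))

section Aux

set_option linter.unusedSectionVars false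

lemma stmt8_cutpred_iff {α : Type*} (X : Finset α) (a b : α) :
    (∃ x y : α, s(a,b) = s(x,y) ∧ x ∈ X ∧ y ∉ X) ↔ ((a ∈ X ∧ b ∉ X) ∨ (b ∈ X ∧ a ∉ X)) := by
  constructor
  · rintro ⟨x, y, h, hx, hy⟩
    rw [Sym2.eq_iff] at h
    rcases h with ⟨rfl, rfl⟩ | ⟨rfl, rfl⟩
    · exact Or.inl ⟨hx, hy⟩
    · exact Or.inr ⟨hx, hy⟩
  · rintro (⟨ha, hb⟩ | ⟨hb, ha⟩)
    · exact ⟨a, b, rfl, ha, hb⟩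
    · exact ⟨b, a, Sym2.eq_swap, hb, ha⟩

variable {V : Type*} [Fintype V] [DecidableEq V] (E : Finset (Sym2 V)) (w : Sym2 V → ℝ)

lemma stmt8_mem_edgesCut_pair (X : Finset V) (a b : V) :
    s(a,b) ∈ edgesCut E X ↔ s(a,b) ∈ E ∧ ((a ∈ X ∧ b ∉ X) ∨ (b ∈ X ∧ a ∉ X)) := by
  rw [edgesCut, mem_filter, stmt8_cutpred_iff]

lemma stmt8_edgesIn_subset_E (X : Finset V) : edgesIn E X ⊆ E := filter_subset _ _

lemma stmt8_edgesCut_subset_E (X : Finset V) : edgesCut E X ⊆ E := filter_subset _ _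

lemma stmt8_edgesIn_mono {X Y : Finset V} (h : X ⊆ Y) : edgesIn E X ⊆ edgesIn E Y := by
  intro e he
  rw [edgesIn, mem_filter] at he ⊢
  exact ⟨he.1, fun a ha => h (he.2 a ha)⟩

lemma stmt8_edgesIn_inter (A B : Finset V) :
    edgesIn E A ∩ edgesIn E B = edgesIn E (A ∩ B) := by
  ext e; simp only [edgesIn, mem_inter, mem_filter]
  constructor
  · rintro ⟨⟨he, hA⟩, ⟨_, hB⟩⟩; exact ⟨he, fun a ha => ⟨hA a ha, hB a ha⟩⟩
  · rintro ⟨he, h⟩; exact ⟨⟨he, fun a ha => (h a ha).1⟩, ⟨he, fun a ha => (h a ha).2⟩⟩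

lemma stmt8_wSum_nonneg (hnn : ∀ e ∈ E, 0 ≤ w e) {F : Finset (Sym2 V)} (hF : F ⊆ E) :
    0 ≤ wSum w F := Finset.sum_nonneg fun e he => hnn e (hF he)

lemma stmt8_wSum_mono (hnn : ∀ e ∈ E, 0 ≤ w e) {F G : Finset (Sym2 V)} (hFG : F ⊆ G)
    (hG : G ⊆ E) : wSum w F ≤ wSum w G :=
  Finset.sum_le_sum_of_subset_of_nonneg hFG fun e he _ => hnn e (hG he)

lemma stmt8_handshake (hsimple : ∀ e ∈ E, ¬ e.IsDiag) (X : Finset V) :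
    ∑ v ∈ X, wSum w (edgesInc E v)
      = 2 * wSum w (edgesIn E X) + wSum w (edgesCut E X) := by
  have key : ∀ e ∈ E,
      ((X.filter (fun v => v ∈ e)).card : ℝ) * w e
        = (if ∀ a ∈ e, a ∈ X then 2 * w e else 0)
          + (if ∃ a b : V, e = s(a,b) ∧ a ∈ X ∧ b ∉ X then w e else 0) := by
    intro e he
    induction e using Sym2.ind with
    | _ x y =>
      have hxy : x ≠ y := by
        simpa [Sym2.mk_isDiag_iff] using hsimple _ he
      have hfil : X.filter (fun v => v ∈ s(x,y)) = X ∩ {x, y} := by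
        ext v; simp [Sym2.mem_iff, mem_insert, and_comm]
      rw [hfil]
      have h1 : (∀ a ∈ s(x,y), a ∈ X) ↔ x ∈ X ∧ y ∈ X := by
        simp [Sym2.mem_iff, forall_eq_or_imp]
      simp only [stmt8_cutpred_iff]
      by_cases hx : x ∈ X <;> by_cases hy : y ∈ X
      · have : X ∩ {x, y} = {x, y} := by
          ext v; simp only [mem_inter, mem_insert, mem_singleton]; aesop
        rw [this, card_insert_of_notMem (by simp [hxy]), card_singleton]
        simp [h1, hx, hy]
      · have : X ∩ {x, y} = {x} := by
          ext v; simp only [mem_inter, mem_insert, mem_singleton]; aesop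
        rw [this, card_singleton]
        simp [h1, hx, hy]
      · have : X ∩ {x, y} = {y} := by
          ext v; simp only [mem_inter, mem_insert, mem_singleton]; aesop
        rw [this, card_singleton]
        simp [h1, hx, hy]
      · have : X ∩ {x, y} = ∅ := by
          ext v; simp only [mem_inter, mem_insert, mem_singleton, notMem_empty, iff_false]; aesop
        rw [this, card_empty]
        simp [h1, hx, hy]
  calc ∑ v ∈ X, wSum w (edgesInc E v)
      = ∑ v ∈ X, ∑ e ∈ E, if v ∈ e then w e else 0 := by
        refine Finset.sum_congr rfl fun v _ => ?_
        rw [wSum, edgesInc, sum_filter]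
    _ = ∑ e ∈ E, ∑ v ∈ X, if v ∈ e then w e else 0 := Finset.sum_comm
    _ = ∑ e ∈ E, ((X.filter (fun v => v ∈ e)).card : ℝ) * w e := by
        refine Finset.sum_congr rfl fun e _ => ?_
        rw [← sum_filter, sum_const, nsmul_eq_mul]
    _ = ∑ e ∈ E, ((if ∀ a ∈ e, a ∈ X then 2 * w e else 0)
          + (if ∃ a b : V, e = s(a,b) ∧ a ∈ X ∧ b ∉ X then w e else 0)) :=
        Finset.sum_congr rfl key
    _ = 2 * wSum w (edgesIn E X) + wSum w (edgesCut E X) := by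
        rw [Finset.sum_add_distrib, wSum, wSum, edgesIn, edgesCut, sum_filter, sum_filter,
          Finset.mul_sum]
        simp only [mul_ite, mul_zero]

lemma stmt8_split_bound (hnn : ∀ e ∈ E, 0 ≤ w e) (A B : Finset V) :
    wSum w (edgesIn E A) + wSum w (edgesIn E B)
      ≤ wSum w (edgesIn E (A \ B)) + wSum w (edgesIn E (B \ A))
        + 2 * wSum w (edgesIn E (A ∩ B)) + wSum w (edgesCut E (A ∩ B)) := by
  set T := A ∩ B with hT
  set RA := edgesIn E A \ edgesIn E (A \ B) with hRA
  set RB := edgesIn E B \ edgesIn E (B \ A) with hRB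
  have hA : wSum w (edgesIn E A) = wSum w (edgesIn E (A \ B)) + wSum w RA := by
    rw [wSum, wSum, wSum, add_comm]
    exact (Finset.sum_sdiff (stmt8_edgesIn_mono E (sdiff_subset))).symm
  have hB : wSum w (edgesIn E B) = wSum w (edgesIn E (B \ A)) + wSum w RB := by
    rw [wSum, wSum, wSum, add_comm]
    exact (Finset.sum_sdiff (stmt8_edgesIn_mono E (sdiff_subset))).symm
  have hcutA : RA \ edgesIn E T ⊆ edgesCut E T := by
    intro e he
    simp only [hRA, mem_sdiff] at he
    obtain ⟨⟨heA, heAB⟩, heT⟩ := he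
    induction e using Sym2.ind with
    | _ x y =>
      simp only [edgesIn, mem_filter, Sym2.mem_iff, forall_eq_or_imp, forall_eq] at heA heAB heT
      obtain ⟨heE, hxA, hyA⟩ := heA
      simp only [edgesCut, mem_filter]
      refine ⟨heE, ?_⟩
      by_cases hxB : x ∈ B
      · have hyB : y ∉ B := by
          intro hyB; exact heT ⟨heE, mem_inter.2 ⟨hxA, hxB⟩, mem_inter.2 ⟨hyA, hyB⟩⟩
        exact ⟨x, y, rfl, mem_inter.2 ⟨hxA, hxB⟩, fun h => hyB (mem_inter.1 h).2⟩
      · have hyB : y ∈ B := by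
          by_contra hyB
          exact heAB ⟨heE, mem_sdiff.2 ⟨hxA, hxB⟩, mem_sdiff.2 ⟨hyA, hyB⟩⟩
        exact ⟨y, x, Sym2.eq_swap, mem_inter.2 ⟨hyA, hyB⟩, fun h => hxB (mem_inter.1 h).2⟩
  have hcutB : RB \ edgesIn E T ⊆ edgesCut E T := by
    intro e he
    simp only [hRB, mem_sdiff] at he
    obtain ⟨⟨heB, heBA⟩, heT⟩ := he
    induction e using Sym2.ind with
    | _ x y =>
      simp only [edgesIn, mem_filter, Sym2.mem_iff, forall_eq_or_imp, forall_eq] at heB heBA heT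
      obtain ⟨heE, hxB, hyB⟩ := heB
      simp only [edgesCut, mem_filter]
      refine ⟨heE, ?_⟩
      by_cases hxA : x ∈ A
      · have hyA : y ∉ A := by
          intro hyA; exact heT ⟨heE, mem_inter.2 ⟨hxA, hxB⟩, mem_inter.2 ⟨hyA, hyB⟩⟩
        exact ⟨x, y, rfl, mem_inter.2 ⟨hxA, hxB⟩, fun h => hyA (mem_inter.1 h).1⟩
      · have hyA : y ∈ A := by
          by_contra hyA
          exact heBA ⟨heE, mem_sdiff.2 ⟨hxB, hxA⟩, mem_sdiff.2 ⟨hyB, hyA⟩⟩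
        exact ⟨y, x, Sym2.eq_swap, mem_inter.2 ⟨hyA, hyB⟩, fun h => hxA (mem_inter.1 h).1⟩
  have hdisj : Disjoint (RA \ edgesIn E T) (RB \ edgesIn E T) := by
    rw [Finset.disjoint_left]
    intro e heA heB
    have h1 : e ∈ edgesIn E A := (mem_sdiff.1 (mem_sdiff.1 heA).1).1
    have h2 : e ∈ edgesIn E B := (mem_sdiff.1 (mem_sdiff.1 heB).1).1
    have : e ∈ edgesIn E T := by
      rw [hT, ← stmt8_edgesIn_inter]; exact mem_inter.2 ⟨h1, h2⟩
    exact (mem_sdiff.1 heA).2 this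
  have hRAsplit : wSum w RA = wSum w (RA ∩ edgesIn E T) + wSum w (RA \ edgesIn E T) := by
    rw [wSum, wSum, wSum]; exact (Finset.sum_inter_add_sum_sdiff _ _ _).symm
  have hRBsplit : wSum w RB = wSum w (RB ∩ edgesIn E T) + wSum w (RB \ edgesIn E T) := by
    rw [wSum, wSum, wSum]; exact (Finset.sum_inter_add_sum_sdiff _ _ _).symm
  have b1 : wSum w (RA ∩ edgesIn E T) ≤ wSum w (edgesIn E T) :=
    stmt8_wSum_mono E w hnn inter_subset_right (stmt8_edgesIn_subset_E E T)
  have b2 : wSum w (RB ∩ edgesIn E T) ≤ wSum w (edgesIn E T) :=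
    stmt8_wSum_mono E w hnn inter_subset_right (stmt8_edgesIn_subset_E E T)
  have b3 : wSum w (RA \ edgesIn E T) + wSum w (RB \ edgesIn E T)
      ≤ wSum w (edgesCut E T) := by
    have : wSum w (RA \ edgesIn E T) + wSum w (RB \ edgesIn E T)
        = wSum w ((RA \ edgesIn E T) ∪ (RB \ edgesIn E T)) := by
      rw [wSum, wSum, wSum, Finset.sum_union hdisj]
    rw [this]
    exact stmt8_wSum_mono E w hnn (union_subset hcutA hcutB) (stmt8_edgesCut_subset_E E T)
  linarith

lemma stmt8_final (hsimple : ∀ e ∈ E, ¬ e.IsDiag) (hnn : ∀ e ∈ E, 0 ≤ w e)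
    (hdeg : ∀ v : V, wSum w (edgesInc E v) ≤ 1)
    (hodd : ∀ S : Finset V, Odd S.card → wSum w (edgesIn E S) ≤ ((S.card : ℝ) - 1) / 2)
    (P Q : Finset V) (hP : Odd P.card) :
    wSum w (edgesIn E P) + wSum w (edgesIn E Q)
      ≤ (((P.card : ℝ) + (Q.card : ℝ)) - 1) / 2 := by
  have h1 := hodd P hP
  have h2 := stmt8_handshake E w hsimple Q
  have h3 : 0 ≤ wSum w (edgesCut E Q) := stmt8_wSum_nonneg E w hnn (stmt8_edgesCut_subset_E E Q)
  have h4 : ∑ v ∈ Q, wSum w (edgesInc E v) ≤ (Q.card : ℝ) := by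
    calc ∑ v ∈ Q, wSum w (edgesInc E v) ≤ ∑ _v ∈ Q, (1 : ℝ) :=
          Finset.sum_le_sum fun v _ => hdeg v
      _ = (Q.card : ℝ) := by simp
  linarith

end Aux

theorem stmt8 {V : Type*} [Fintype V] [DecidableEq V] (E : Finset (Sym2 V)) (w : Sym2 V → ℝ)
    (hsimple : ∀ e ∈ E, ¬ e.IsDiag)
    (hnonneg : ∀ e ∈ E, 0 ≤ w e)
    (hdeg : ∀ v : V, wSum w (edgesInc E v) ≤ 1)
    (hodd : ∀ S : Finset V, Odd S.card → wSum w (edgesIn E S) ≤ ((S.card : ℝ) - 1) / 2)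
    (wt : Sym2 (V ⊕ V) → ℝ)
    (hcopy₁ : ∀ a b : V, s(a, b) ∈ E → wt s(Sum.inl a, Sum.inl b) = w s(a, b))
    (hcopy₂ : ∀ a b : V, s(a, b) ∈ E → wt s(Sum.inr a, Sum.inr b) = w s(a, b))
    (hpair : ∀ v : V, wt s(Sum.inl v, Sum.inr v) = 1 - wSum w (edgesInc E v)) :
    ∀ S : Finset (V ⊕ V), Odd S.card → 1 ≤ wSum wt (edgesCut (doubledEdges E) S) := by
  intro S hS
  classical
  set A : Finset V := univ.filter (fun v => Sum.inl v ∈ S) with hAdef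
  set B : Finset V := univ.filter (fun v => Sum.inr v ∈ S) with hBdef
  have hAmem : ∀ v : V, v ∈ A ↔ Sum.inl v ∈ S := by intro v; simp [hAdef]
  have hBmem : ∀ v : V, v ∈ B ↔ Sum.inr v ∈ S := by intro v; simp [hBdef]
  -- decomposition of the cut of the doubled graph
  set Δ : Finset V := (A \ B) ∪ (B \ A) with hΔdef
  have hΔmem : ∀ v : V, v ∈ Δ ↔
      ((Sum.inl v ∈ S ∧ Sum.inr v ∉ S) ∨ (Sum.inr v ∈ S ∧ Sum.inl v ∉ S)) := by
    intro v
    simp only [hΔdef, mem_union, mem_sdiff, hAmem, hBmem]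
  have hdecomp : wSum wt (edgesCut (doubledEdges E) S)
      = wSum w (edgesCut E A) + wSum w (edgesCut E B)
        + ∑ v ∈ Δ, (1 - wSum w (edgesInc E v)) := by
    have e1 : (E.image (Sym2.map Sum.inl)).filter
          (fun e => ∃ a b : V ⊕ V, e = s(a, b) ∧ a ∈ S ∧ b ∉ S)
        = (edgesCut E A).image (Sym2.map Sum.inl) := by
      ext e
      simp only [mem_filter, mem_image]
      constructor
      · rintro ⟨⟨e₀, he₀, rfl⟩, hp⟩
        refine ⟨e₀, ?_, rfl⟩
        induction e₀ using Sym2.ind with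
        | _ a b =>
          rw [Sym2.map_pair_eq, stmt8_cutpred_iff] at hp
          rw [stmt8_mem_edgesCut_pair]
          refine ⟨he₀, ?_⟩
          rcases hp with ⟨h1, h2⟩ | ⟨h1, h2⟩
          · exact Or.inl ⟨(hAmem a).2 h1, fun h => h2 ((hAmem b).1 h)⟩
          · exact Or.inr ⟨(hAmem b).2 h1, fun h => h2 ((hAmem a).1 h)⟩
      · rintro ⟨e₀, he₀, rfl⟩
        induction e₀ using Sym2.ind with
        | _ a b =>
          rw [stmt8_mem_edgesCut_pair] at he₀
          refine ⟨⟨s(a, b), he₀.1, rfl⟩, ?_⟩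
          rw [Sym2.map_pair_eq, stmt8_cutpred_iff]
          rcases he₀.2 with ⟨h1, h2⟩ | ⟨h1, h2⟩
          · exact Or.inl ⟨(hAmem a).1 h1, fun h => h2 ((hAmem b).2 h)⟩
          · exact Or.inr ⟨(hAmem b).1 h1, fun h => h2 ((hAmem a).2 h)⟩
    have e2 : (E.image (Sym2.map Sum.inr)).filter
          (fun e => ∃ a b : V ⊕ V, e = s(a, b) ∧ a ∈ S ∧ b ∉ S)
        = (edgesCut E B).image (Sym2.map Sum.inr) := by
      ext e
      simp only [mem_filter, mem_image]
      constructor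
      · rintro ⟨⟨e₀, he₀, rfl⟩, hp⟩
        refine ⟨e₀, ?_, rfl⟩
        induction e₀ using Sym2.ind with
        | _ a b =>
          rw [Sym2.map_pair_eq, stmt8_cutpred_iff] at hp
          rw [stmt8_mem_edgesCut_pair]
          refine ⟨he₀, ?_⟩
          rcases hp with ⟨h1, h2⟩ | ⟨h1, h2⟩
          · exact Or.inl ⟨(hBmem a).2 h1, fun h => h2 ((hBmem b).1 h)⟩
          · exact Or.inr ⟨(hBmem b).2 h1, fun h => h2 ((hBmem a).1 h)⟩
      · rintro ⟨e₀, he₀, rfl⟩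
        induction e₀ using Sym2.ind with
        | _ a b =>
          rw [stmt8_mem_edgesCut_pair] at he₀
          refine ⟨⟨s(a, b), he₀.1, rfl⟩, ?_⟩
          rw [Sym2.map_pair_eq, stmt8_cutpred_iff]
          rcases he₀.2 with ⟨h1, h2⟩ | ⟨h1, h2⟩
          · exact Or.inl ⟨(hBmem a).1 h1, fun h => h2 ((hBmem b).2 h)⟩
          · exact Or.inr ⟨(hBmem b).1 h1, fun h => h2 ((hBmem a).2 h)⟩
    have e3 : (univ.image (fun v : V => s(Sum.inl v, Sum.inr v))).filter
          (fun e => ∃ a b : V ⊕ V, e = s(a, b) ∧ a ∈ S ∧ b ∉ S)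
        = Δ.image (fun v : V => s(Sum.inl v, Sum.inr v)) := by
      ext e
      simp only [mem_filter, mem_image]
      constructor
      · rintro ⟨⟨v, _, rfl⟩, hp⟩
        rw [stmt8_cutpred_iff] at hp
        exact ⟨v, (hΔmem v).2 hp, rfl⟩
      · rintro ⟨v, hv, rfl⟩
        refine ⟨⟨v, mem_univ v, rfl⟩, ?_⟩
        rw [stmt8_cutpred_iff]
        exact (hΔmem v).1 hv
    have hsplit : edgesCut (doubledEdges E) S
        = ((edgesCut E A).image (Sym2.map Sum.inl)
            ∪ (edgesCut E B).image (Sym2.map Sum.inr))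
          ∪ Δ.image (fun v : V => s(Sum.inl v, Sum.inr v)) := by
      rw [edgesCut, doubledEdges, filter_union, filter_union, e1, e2, e3]
    have hd12 : Disjoint ((edgesCut E A).image (Sym2.map Sum.inl))
        ((edgesCut E B).image (Sym2.map Sum.inr)) := by
      rw [Finset.disjoint_left]
      rintro e he1 he2
      obtain ⟨e₀, -, rfl⟩ := mem_image.1 he1
      obtain ⟨e₁, -, heq⟩ := mem_image.1 he2
      induction e₀ using Sym2.ind with
      | _ a b =>
        induction e₁ using Sym2.ind with
        | _ c d =>
          rw [Sym2.map_pair_eq, Sym2.map_pair_eq, Sym2.eq_iff] at heq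
          rcases heq with ⟨h, -⟩ | ⟨h, -⟩ <;> exact Sum.inr_ne_inl h
    have hd3 : Disjoint ((edgesCut E A).image (Sym2.map Sum.inl)
          ∪ (edgesCut E B).image (Sym2.map Sum.inr))
        (Δ.image (fun v : V => s(Sum.inl v, Sum.inr v))) := by
      rw [Finset.disjoint_left]
      rintro e he1 he2
      obtain ⟨v, -, rfl⟩ := mem_image.1 he2
      rcases mem_union.1 he1 with h | h
      · obtain ⟨e₀, -, heq⟩ := mem_image.1 h
        induction e₀ using Sym2.ind with
        | _ a b =>
          rw [Sym2.map_pair_eq, Sym2.eq_iff] at heq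
          rcases heq with ⟨-, h2⟩ | ⟨h2, -⟩ <;> exact Sum.inl_ne_inr h2
      · obtain ⟨e₀, -, heq⟩ := mem_image.1 h
        induction e₀ using Sym2.ind with
        | _ a b =>
          rw [Sym2.map_pair_eq, Sym2.eq_iff] at heq
          rcases heq with ⟨h2, -⟩ | ⟨-, h2⟩ <;> exact Sum.inr_ne_inl h2
    have s1 : wSum wt ((edgesCut E A).image (Sym2.map Sum.inl)) = wSum w (edgesCut E A) := by
      rw [wSum, wSum, Finset.sum_image
        (fun x _ y _ h => Sym2.map.injective Sum.inl_injective h)]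
      refine Finset.sum_congr rfl fun e₀ he₀ => ?_
      induction e₀ using Sym2.ind with
      | _ a b =>
        rw [Sym2.map_pair_eq]
        exact hcopy₁ a b (stmt8_edgesCut_subset_E E A he₀)
    have s2 : wSum wt ((edgesCut E B).image (Sym2.map Sum.inr)) = wSum w (edgesCut E B) := by
      rw [wSum, wSum, Finset.sum_image
        (fun x _ y _ h => Sym2.map.injective Sum.inr_injective h)]
      refine Finset.sum_congr rfl fun e₀ he₀ => ?_
      induction e₀ using Sym2.ind with
      | _ a b =>
        rw [Sym2.map_pair_eq]
        exact hcopy₂ a b (stmt8_edgesCut_subset_E E B he₀)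
    have hinj3 : ∀ x ∈ Δ, ∀ y ∈ Δ,
        s(Sum.inl x, Sum.inr x) = s(Sum.inl y, Sum.inr y) → x = y := by
      intro x _ y _ h
      rw [Sym2.eq_iff] at h
      rcases h with ⟨h1, -⟩ | ⟨h1, -⟩
      · exact Sum.inl_injective h1
      · exact absurd h1 (Sum.inl_ne_inr)
    have s3 : wSum wt (Δ.image (fun v : V => s(Sum.inl v, Sum.inr v)))
        = ∑ v ∈ Δ, (1 - wSum w (edgesInc E v)) := by
      rw [wSum, Finset.sum_image hinj3]
      exact Finset.sum_congr rfl fun v _ => hpair v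
    rw [hsplit]
    have hu : wSum wt (((edgesCut E A).image (Sym2.map Sum.inl)
          ∪ (edgesCut E B).image (Sym2.map Sum.inr))
        ∪ Δ.image (fun v : V => s(Sum.inl v, Sum.inr v)))
        = wSum wt ((edgesCut E A).image (Sym2.map Sum.inl))
          + wSum wt ((edgesCut E B).image (Sym2.map Sum.inr))
          + wSum wt (Δ.image (fun v : V => s(Sum.inl v, Sum.inr v))) := by
      rw [wSum, Finset.sum_union hd3, Finset.sum_union hd12]; rfl
    rw [hu, s1, s2, s3]
  -- cardinality of S
  have hdisjS : Disjoint (A.image Sum.inl) (B.image Sum.inr) := by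
    rw [Finset.disjoint_left]
    rintro x hx hy
    obtain ⟨v, -, rfl⟩ := mem_image.1 hx
    obtain ⟨u, -, h⟩ := mem_image.1 hy
    exact Sum.inr_ne_inl h
  have hScard : S.card = A.card + B.card := by
    have himg : S = A.image Sum.inl ∪ B.image Sum.inr := by
      ext x
      cases x with
      | inl v => simp [mem_union, mem_image, (hAmem v).symm]
      | inr v => simp [mem_union, mem_image, (hBmem v).symm]
    rw [himg, card_union_of_disjoint hdisjS, card_image_of_injective _ Sum.inl_injective,
      card_image_of_injective _ Sum.inr_injective]
  -- arithmetic setup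
  have hhA := stmt8_handshake E w hsimple A
  have hhB := stmt8_handshake E w hsimple B
  have hhT := stmt8_handshake E w hsimple (A ∩ B)
  have hsA : ∑ v ∈ A, wSum w (edgesInc E v)
      = ∑ v ∈ A \ B, wSum w (edgesInc E v) + ∑ v ∈ A ∩ B, wSum w (edgesInc E v) := by
    have h := (Finset.sum_sdiff (f := fun v => wSum w (edgesInc E v))
      (inter_subset_left : A ∩ B ⊆ A)).symm
    rwa [Finset.sdiff_inter_self_left] at h
  have hsB : ∑ v ∈ B, wSum w (edgesInc E v)
      = ∑ v ∈ B \ A, wSum w (edgesInc E v) + ∑ v ∈ A ∩ B, wSum w (edgesInc E v) := by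
    have h := (Finset.sum_sdiff (f := fun v => wSum w (edgesInc E v))
      (inter_subset_right : A ∩ B ⊆ B)).symm
    have h1 : B \ (A ∩ B) = B \ A := by rw [inter_comm]; exact Finset.sdiff_inter_self_left B A
    rwa [h1] at h
  have hsΔ : ∑ v ∈ Δ, (1 - wSum w (edgesInc E v))
      = (((A \ B).card : ℝ) - ∑ v ∈ A \ B, wSum w (edgesInc E v))
        + (((B \ A).card : ℝ) - ∑ v ∈ B \ A, wSum w (edgesInc E v)) := by
    rw [hΔdef, Finset.sum_union (disjoint_sdiff_sdiff), Finset.sum_sub_distrib,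
      Finset.sum_sub_distrib]
    simp
  have h6 := stmt8_split_bound E w hnonneg A B
  -- parity
  have hpar : Odd ((A \ B).card + (B \ A).card) := by
    have c1 := Finset.card_sdiff_add_card_inter A B
    have c2 := Finset.card_sdiff_add_card_inter B A
    have c3 : (B ∩ A).card = (A ∩ B).card := by rw [inter_comm]
    obtain ⟨k, hk⟩ := hS
    exact ⟨k - (A ∩ B).card, by omega⟩
  have h7 : wSum w (edgesIn E (A \ B)) + wSum w (edgesIn E (B \ A))
      ≤ ((((A \ B).card : ℝ) + ((B \ A).card : ℝ)) - 1) / 2 := by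
    rcases Nat.even_or_odd (A \ B).card with hev | hodd'
    · have hoddBA : Odd (B \ A).card := by
        obtain ⟨k, hk⟩ := hpar
        obtain ⟨m, hm⟩ := hev
        exact ⟨k - m, by omega⟩
      have := stmt8_final E w hsimple hnonneg hdeg hodd (B \ A) (A \ B) hoddBA
      linarith
    · have := stmt8_final E w hsimple hnonneg hdeg hodd (A \ B) (B \ A) hodd'
      linarith
  have hCT : 0 ≤ wSum w (edgesCut E (A ∩ B)) :=
    stmt8_wSum_nonneg E w hnonneg (stmt8_edgesCut_subset_E E (A ∩ B))
  rw [hdecomp, hsΔ]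
  linarith
end

section
/- Let T be a finite tree with an even number of vertices, and let U be a vertex subset of odd cardinality. Then there exists an edge f of T such that one of the two components of T \ f has odd cardinality and f lies in the cut-set δ_T(U). -/
set_option maxHeartbeats 1000000

open Finset

section Aux

variable {V : Type*} [Fintype V] [DecidableEq V] (T : SimpleGraph V) [DecidableRel T.Adj]

/-- The component of `a` in `T` minus the edge `f`, as a finset. -/
noncomputable def Wcomp (f : Sym2 V) (a : V) : Finset V :=
  (Set.toFinite {x | (T.deleteEdges {f}).Reachable a x}).toFinset

variable {T}

lemma mem_Wcomp {f : Sym2 V} {a x : V} :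
    x ∈ Wcomp T f a ↔ (T.deleteEdges {f}).Reachable a x :=
  Set.Finite.mem_toFinset _

lemma self_mem_Wcomp {f : Sym2 V} {a : V} : a ∈ Wcomp T f a :=
  mem_Wcomp.mpr (SimpleGraph.Reachable.refl a)

/-- Every edge of an acyclic graph is a bridge. -/
lemma bridge_not_reach (hT : T.IsAcyclic) {a b : V} (hab : T.Adj a b) :
    ¬ (T.deleteEdges {s(a, b)}).Reachable a b := by
  have h := (SimpleGraph.isAcyclic_iff_forall_adj_isBridge.mp hT hab)
  exact SimpleGraph.isBridge_iff.mp h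

lemma not_mem_Wcomp (hT : T.IsAcyclic) {a b : V} (hab : T.Adj a b) :
    b ∉ Wcomp T s(a, b) a := fun h => bridge_not_reach hT hab (mem_Wcomp.mp h)

lemma Wcomp_step (hT : T.IsAcyclic) {a b x z : V} (hab : T.Adj a b) (hxz : T.Adj x z)
    (hx : x ∈ Wcomp T s(a, b) a ∨ x ∈ Wcomp T s(a, b) b) :
    z ∈ Wcomp T s(a, b) a ∨ z ∈ Wcomp T s(a, b) b := by
  by_cases he : s(x, z) = s(a, b)
  · rw [Sym2.eq_iff] at he
    rcases he with ⟨rfl, rfl⟩ | ⟨rfl, rfl⟩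
    · exact Or.inr self_mem_Wcomp
    · exact Or.inl self_mem_Wcomp
  · have hadj : (T.deleteEdges {s(a, b)}).Adj x z := by
      rw [SimpleGraph.deleteEdges_adj]
      exact ⟨hxz, by simpa using he⟩
    rcases hx with h | h
    · exact Or.inl (mem_Wcomp.mpr ((mem_Wcomp.mp h).trans hadj.reachable))
    · exact Or.inr (mem_Wcomp.mpr ((mem_Wcomp.mp h).trans hadj.reachable))

lemma Wcomp_total (hT : T.IsTree) {a b : V} (hab : T.Adj a b) (x : V) :
    x ∈ Wcomp T s(a, b) a ∨ x ∈ Wcomp T s(a, b) b := by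
  obtain ⟨w⟩ := hT.isConnected.preconnected a x
  have : ∀ {y z : V} (w : T.Walk y z),
      (y ∈ Wcomp T s(a, b) a ∨ y ∈ Wcomp T s(a, b) b) →
      (z ∈ Wcomp T s(a, b) a ∨ z ∈ Wcomp T s(a, b) b) := by
    intro y z w
    induction w with
    | nil => exact id
    | cons h p ih => exact fun hy => ih (Wcomp_step hT.IsAcyclic hab h hy)
  exact this w (Or.inl self_mem_Wcomp)

lemma Wcomp_disjoint (hT : T.IsAcyclic) {a b : V} (hab : T.Adj a b) :
    Disjoint (Wcomp T s(a, b) a) (Wcomp T s(a, b) b) := by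
  rw [Finset.disjoint_left]
  intro x hxa hxb
  exact bridge_not_reach hT hab ((mem_Wcomp.mp hxa).trans (mem_Wcomp.mp hxb).symm)

lemma Wcomp_card_add (hT : T.IsTree) {a b : V} (hab : T.Adj a b) :
    (Wcomp T s(a, b) a).card + (Wcomp T s(a, b) b).card = Fintype.card V := by
  rw [← Finset.card_union_of_disjoint (Wcomp_disjoint hT.IsAcyclic hab)]
  rw [← Finset.card_univ]
  congr 1
  ext x
  simp only [Finset.mem_union, Finset.mem_univ, iff_true]
  exact Wcomp_total hT hab x

lemma Wcomp_cut (hT : T.IsTree) {a b : V} (hab : T.Adj a b) :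
    edgesCut T.edgeFinset (Wcomp T s(a, b) a) = {s(a, b)} := by
  ext e
  simp only [edgesCut, Finset.mem_filter, Finset.mem_singleton, SimpleGraph.mem_edgeFinset]
  constructor
  · rintro ⟨he, x, y, rfl, hx, hy⟩
    by_contra hne
    apply hy
    have hadj : (T.deleteEdges {s(a, b)}).Adj x y := by
      rw [SimpleGraph.deleteEdges_adj]
      exact ⟨T.mem_edgeSet.mp he, by simpa using hne⟩
    exact mem_Wcomp.mpr ((mem_Wcomp.mp hx).trans hadj.reachable)
  · rintro rfl
    exact ⟨T.mem_edgeSet.mpr hab, a, b, rfl, self_mem_Wcomp,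
      not_mem_Wcomp hT.IsAcyclic hab⟩

lemma Wcomp_avoid_support (hT : T.IsAcyclic) {v u x : V} (hvu : T.Adj v u)
    (w : (T.deleteEdges {s(v, u)}).Walk u x) : v ∉ w.support := by
  intro hv
  have : (T.deleteEdges {s(v, u)}).Reachable u v := ⟨w.takeUntil v hv⟩
  exact bridge_not_reach hT hvu this.symm

lemma Wcomp_pairwise_disjoint (hT : T.IsTree) {v u₁ u₂ : V} (h₁ : T.Adj v u₁)
    (h₂ : T.Adj v u₂) (hne : u₁ ≠ u₂) :
    Disjoint (Wcomp T s(v, u₁) u₁) (Wcomp T s(v, u₂) u₂) := by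
  rw [Finset.disjoint_left]
  intro x hx₁ hx₂
  obtain ⟨w₁⟩ := mem_Wcomp.mp hx₁
  obtain ⟨w₂⟩ := mem_Wcomp.mp hx₂
  have hv₂ : v ∉ w₂.support := Wcomp_avoid_support hT.IsAcyclic h₂ w₂
  -- transfer w₂ into T.deleteEdges {s(v, u₁)}
  have hw₂ : ∀ e ∈ w₂.edges, e ∈ (T.deleteEdges {s(v, u₁)}).edgeSet := by
    intro e he
    have heT := w₂.edges_subset_edgeSet he
    rw [SimpleGraph.edgeSet_deleteEdges] at heT ⊢
    refine ⟨heT.1, ?_⟩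
    simp only [Set.mem_singleton_iff]
    rintro rfl
    exact hv₂ (w₂.fst_mem_support_of_mem_edges he)
  have w₂' := w₂.transfer (T.deleteEdges {s(v, u₁)}) hw₂
  have hreach : (T.deleteEdges {s(v, u₁)}).Reachable u₁ u₂ := ⟨w₁.append w₂'.reverse⟩
  have hadj : (T.deleteEdges {s(v, u₁)}).Adj u₂ v := by
    rw [SimpleGraph.deleteEdges_adj]
    refine ⟨h₂.symm, ?_⟩
    simp only [Set.mem_singleton_iff, Sym2.eq_iff]
    rintro (⟨rfl, rfl⟩ | ⟨h', -⟩)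
    · exact h₂.ne rfl
    · exact hne h'.symm
  exact bridge_not_reach hT.IsAcyclic h₁ (hreach.trans hadj.reachable).symm

lemma Wcomp_biUnion (hT : T.IsTree) (v : V) :
    (T.neighborFinset v).biUnion (fun u => Wcomp T s(v, u) u) = Finset.univ.erase v := by
  ext x
  simp only [Finset.mem_biUnion, Finset.mem_erase, Finset.mem_univ, and_true,
    SimpleGraph.mem_neighborFinset]
  constructor
  · rintro ⟨u, hu, hx⟩
    rintro rfl
    obtain ⟨w⟩ := mem_Wcomp.mp hx
    exact Wcomp_avoid_support hT.IsAcyclic hu w w.end_mem_support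
  · intro hx
    obtain ⟨w⟩ := hT.isConnected.preconnected v x
    obtain ⟨p, hp⟩ := w.toPath
    obtain ⟨u, hvu, q, rfl⟩ := SimpleGraph.Walk.exists_eq_cons_of_ne (Ne.symm hx) p
    rw [SimpleGraph.Walk.cons_isPath_iff] at hp
    refine ⟨u, hvu, mem_Wcomp.mpr ⟨q.toDeleteEdges {s(v, u)} ?_⟩⟩
    intro e he
    simp only [Set.mem_singleton_iff]
    rintro rfl
    exact hp.2 (q.fst_mem_support_of_mem_edges he)

lemma Wcomp_sum_card (hT : T.IsTree) (v : V) :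
    ∑ u ∈ T.neighborFinset v, (Wcomp T s(v, u) u).card = Fintype.card V - 1 := by
  rw [← Finset.card_biUnion, Wcomp_biUnion hT v, Finset.card_erase_of_mem (Finset.mem_univ v),
    Finset.card_univ]
  intro u₁ h₁ u₂ h₂ hne
  rw [Finset.mem_coe, SimpleGraph.mem_neighborFinset] at h₁ h₂
  exact Wcomp_pairwise_disjoint hT h₁ h₂ hne

end Aux

theorem stmt12 {V : Type*} [Fintype V] [DecidableEq V] (T : SimpleGraph V) [DecidableRel T.Adj]
    (hT : T.IsTree) (heven : Even (Fintype.card V)) (U : Finset V) (hU : Odd U.card) :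
    ∃ f ∈ edgesCut T.edgeFinset U, ∃ Wf : Finset V,
      edgesCut T.edgeFinset Wf = {f} ∧ Odd Wf.card := by
  by_contra hcon
  push_neg at hcon
  -- the weight of a (directed) edge: the parity of the component of `u` in `T - vu`.
  set c : V → V → ZMod 2 := fun v u => ((Wcomp T s(v, u) u).card : ZMod 2) with hc
  have hVpos : 1 ≤ Fintype.card V := by
    have : U.Nonempty := Finset.card_pos.mp hU.pos
    obtain ⟨x, _⟩ := this
    exact Fintype.card_pos_iff.mpr ⟨x⟩
  have hodd : Odd (Fintype.card V - 1) := Nat.Even.sub_odd hVpos heven odd_one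
  have key1 : ∀ v : V, ∑ u ∈ T.neighborFinset v, c v u = 1 := by
    intro v
    have := Wcomp_sum_card hT v
    calc ∑ u ∈ T.neighborFinset v, c v u
        = ((∑ u ∈ T.neighborFinset v, (Wcomp T s(v, u) u).card : ℕ) : ZMod 2) := by
          push_cast; rfl
      _ = ((Fintype.card V - 1 : ℕ) : ZMod 2) := by rw [this]
      _ = 1 := by
          obtain ⟨k, hk⟩ := hodd
          rw [hk]; push_cast; ring_nf
          simp [show (2 : ZMod 2) = 0 from rfl]
  -- the double sum
  have hS : ∑ v ∈ U, ∑ u ∈ T.neighborFinset v, c v u = 1 := by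
    rw [Finset.sum_congr rfl (fun v _ => key1 v), Finset.sum_const, nsmul_eq_mul, mul_one]
    obtain ⟨k, hk⟩ := hU
    rw [hk]; push_cast; ring_nf
    simp [show (2 : ZMod 2) = 0 from rfl]
  -- split each inner sum according to membership in U
  have hsplit : ∀ v ∈ U, ∑ u ∈ T.neighborFinset v, c v u =
      ∑ u ∈ (T.neighborFinset v).filter (· ∈ U), c v u := by
    intro v hv
    rw [← Finset.sum_filter_add_sum_filter_not (T.neighborFinset v) (· ∈ U)]
    have : ∑ u ∈ (T.neighborFinset v).filter (fun u => ¬ u ∈ U), c v u = 0 := by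
      apply Finset.sum_eq_zero
      intro u hu
      rw [Finset.mem_filter, SimpleGraph.mem_neighborFinset] at hu
      have hfmem : s(v, u) ∈ edgesCut T.edgeFinset U := by
        rw [edgesCut, Finset.mem_filter, SimpleGraph.mem_edgeFinset]
        exact ⟨hu.1, v, u, rfl, hv, hu.2⟩
      have hcut : edgesCut T.edgeFinset (Wcomp T s(v, u) u) = {s(v, u)} := by
        have := Wcomp_cut hT hu.1.symm
        rwa [Sym2.eq_swap] at this
      have := hcon _ hfmem _ hcut
      rw [Nat.not_odd_iff_even] at this
      simp only [hc]
      obtain ⟨k, hk⟩ := this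
      rw [hk]; push_cast; ring_nf
      simp [show (2 : ZMod 2) = 0 from rfl]
    rw [this, add_zero]
  rw [Finset.sum_congr rfl hsplit] at hS
  -- rewrite as a sum over pairs and use the swap involution
  have hpair : ∑ v ∈ U, ∑ u ∈ (T.neighborFinset v).filter (· ∈ U), c v u =
      ∑ p ∈ (U ×ˢ U).filter (fun p => T.Adj p.1 p.2), c p.1 p.2 := by
    have step1 : ∀ v : V, ∑ u ∈ (T.neighborFinset v).filter (· ∈ U), c v u
        = ∑ u ∈ U, if T.Adj v u then c v u else 0 := by
      intro v
      rw [← Finset.sum_filter]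
      apply Finset.sum_congr _ (fun _ _ => rfl)
      ext u
      simp [SimpleGraph.mem_neighborFinset, and_comm]
    calc ∑ v ∈ U, ∑ u ∈ (T.neighborFinset v).filter (· ∈ U), c v u
        = ∑ v ∈ U, ∑ u ∈ U, if T.Adj v u then c v u else 0 :=
          Finset.sum_congr rfl (fun v _ => step1 v)
      _ = ∑ p ∈ U ×ˢ U, if T.Adj p.1 p.2 then c p.1 p.2 else 0 := by rw [Finset.sum_product]
      _ = ∑ p ∈ (U ×ˢ U).filter (fun p => T.Adj p.1 p.2), c p.1 p.2 :=
          (Finset.sum_filter _ _).symm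
  have hswap : ∑ p ∈ (U ×ˢ U).filter (fun p => T.Adj p.1 p.2), c p.1 p.2 = 0 := by
    have h1 : ∀ (p : V × V), p ∈ (U ×ˢ U).filter (fun p => T.Adj p.1 p.2) →
        c p.1 p.2 + c p.swap.1 p.swap.2 = 0 := by
      intro p hp
      rw [Finset.mem_filter] at hp
      show c p.1 p.2 + c p.2 p.1 = 0
      have hsum := Wcomp_card_add hT hp.2
      simp only [hc]
      rw [show s(p.2, p.1) = s(p.1, p.2) from Sym2.eq_swap]
      rw [← Nat.cast_add, add_comm, hsum]
      obtain ⟨k, hk⟩ := heven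
      rw [hk]; push_cast; ring_nf
      simp [show (2 : ZMod 2) = 0 from rfl]
    have h3 : ∀ (p : V × V), p ∈ (U ×ˢ U).filter (fun p => T.Adj p.1 p.2) →
        c p.1 p.2 ≠ 0 → p.swap ≠ p := by
      intro p hp _ h
      rw [Finset.mem_filter] at hp
      have := congrArg Prod.fst h
      exact hp.2.ne (by simpa using this.symm)
    have gmem : ∀ (p : V × V), p ∈ (U ×ˢ U).filter (fun p => T.Adj p.1 p.2) →
        p.swap ∈ (U ×ˢ U).filter (fun p => T.Adj p.1 p.2) := by
      intro p hp
      rw [Finset.mem_filter] at hp ⊢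
      rw [Finset.mem_product] at hp ⊢
      exact ⟨⟨hp.1.2, hp.1.1⟩, hp.2.symm⟩
    exact Finset.sum_involution (fun p _ => p.swap) h1 h3 gmem (fun p hp => rfl)
  rw [hpair, hswap] at hS
  exact zero_ne_one hS
end

section
/- Let G̃ be a finite connected undirected graph with nonnegative edge capacities λ̃ and an even number of vertices, and let T = (V, F, α) be a Gomory–Hu tree for G̃ (for every edge f = (s,t) ∈ F, the two components of T \ f form a minimum-capacity s–t cut in G̃ of value α(f)). Then among the cuts determined by removing a single edge of T, there is one with both sides of odd cardinality whose capacity equals the minimum capacity over all odd cuts of G̃. -/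
open Finset

namespace GHAux

open SimpleGraph

variable {V : Type*} [Fintype V] [DecidableEq V]

/-- crossing predicate -/
def Cross (S : Finset V) (e : Sym2 V) : Prop := ∃ a b : V, e = s(a, b) ∧ a ∈ S ∧ b ∉ S

lemma cross_pair_iff (S : Finset V) (x y : V) :
    Cross S s(x, y) ↔ ((x ∈ S ∧ y ∉ S) ∨ (y ∈ S ∧ x ∉ S)) := by
  constructor
  · rintro ⟨a, b, he, ha, hb⟩
    rw [Sym2.eq_iff] at he
    rcases he with ⟨rfl, rfl⟩ | ⟨rfl, rfl⟩
    · exact Or.inl ⟨ha, hb⟩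
    · exact Or.inr ⟨ha, hb⟩
  · rintro (⟨h1, h2⟩ | ⟨h1, h2⟩)
    · exact ⟨x, y, rfl, h1, h2⟩
    · exact ⟨y, x, Sym2.eq_swap, h1, h2⟩

lemma even_cast_zmod_two (n : ℕ) (h : Even n) : (n : ZMod 2) = 0 := by
  obtain ⟨k, rfl⟩ := h
  push_cast
  have h2 : (2 : ZMod 2) = 0 := rfl
  rw [show (k : ZMod 2) + k = 2 * k by ring, h2, zero_mul]

lemma odd_cast_zmod_two (n : ℕ) (h : Odd n) : (n : ZMod 2) = 1 := by
  obtain ⟨k, rfl⟩ := h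
  push_cast
  have h2 : (2 : ZMod 2) = 0 := rfl
  rw [h2, zero_mul, zero_add]

open Classical in
/-- Parity of the number of crossing edges along a walk. -/
lemma countP_cross_parity {T : SimpleGraph V} (S : Finset V) {x y : V} (p : T.Walk x y) :
    ((p.edges.countP (fun e => decide (Cross S e))) : ZMod 2)
      = (if x ∈ S then 1 else 0) + (if y ∈ S then 1 else 0) := by
  induction p with
  | nil =>
    simp only [Walk.edges_nil, List.countP_nil, Nat.cast_zero]
    split <;> decide
  | @cons u v w h p ih =>
    rw [Walk.edges_cons, List.countP_cons]
    push_cast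
    rw [ih]
    by_cases hu : u ∈ S <;> by_cases hv : v ∈ S <;>
      simp [cross_pair_iff, hu, hv] <;> (split <;> decide)


/-- An edge of the tree lies on the (unique) path from `r` to `v` iff deleting it
disconnects `r` from `v`. -/
lemma mem_path_edges_iff {T : SimpleGraph V} (hT : T.IsTree)
    {r v : V} {p : T.Walk r v} (hp : p.IsPath) {f : Sym2 V} :
    f ∈ p.edges ↔ ¬ (T.deleteEdges {f}).Reachable r v := by
  constructor
  · intro hmem hreach
    obtain ⟨q⟩ := hreach
    have hsub : ∀ e ∈ q.edges, e ∈ T.edgeSet := fun e he => by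
      have h1 := q.edges_subset_edgeSet he
      rw [edgeSet_deleteEdges] at h1
      exact h1.1
    have hq'p : (q.transfer T hsub).bypass.IsPath := Walk.bypass_isPath _
    obtain ⟨p0, _, hun⟩ := hT.existsUnique_path r v
    have hpq : p = (q.transfer T hsub).bypass := (hun p hp).trans (hun _ hq'p).symm
    have h2 : f ∈ q.edges := by
      rw [← Walk.edges_transfer q hsub]
      exact Walk.edges_bypass_subset _ (hpq ▸ hmem)
    have h3 := q.edges_subset_edgeSet h2
    rw [edgeSet_deleteEdges] at h3
    exact h3.2 rfl
  · intro h
    by_contra hmem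
    exact h ⟨p.toDeleteEdge f hmem⟩

/-- After deleting a tree edge `{a, b}`, every vertex is still reachable from `a` or `b`. -/
lemma reachable_endpoint {T : SimpleGraph V} (hc : T.Connected) {a b : V} (hab : T.Adj a b)
    (v : V) :
    (T.deleteEdges {s(a, b)}).Reachable a v ∨ (T.deleteEdges {s(a, b)}).Reachable b v := by
  obtain ⟨w⟩ := hc.preconnected a v
  have hpp : w.bypass.IsPath := w.bypass_isPath
  set p := w.bypass with hpdef
  by_cases hf : s(a, b) ∈ p.edges
  · have hb : b ∈ p.support := p.snd_mem_support_of_mem_edges hf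
    refine Or.inr ⟨(p.dropUntil b hb).toDeleteEdge _ ?_⟩
    intro hfq
    have haq : a ∈ (p.dropUntil b hb).support :=
      (p.dropUntil b hb).fst_mem_support_of_mem_edges hfq
    have hnd : p.support.Nodup := hpp.support_nodup
    rw [← p.take_spec hb, Walk.support_append] at hnd
    have hdisj := List.disjoint_of_nodup_append hnd
    have hat : a ∈ (p.takeUntil b hb).support := Walk.start_mem_support _
    rw [Walk.support_eq_cons, List.mem_cons] at haq
    rcases haq with h | h
    · exact hab.ne h
    · exact hdisj hat h
  · exact Or.inl ⟨p.toDeleteEdge _ hf⟩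

end GHAux

theorem stmt13 {V : Type*} [Fintype V] [DecidableEq V]
    (G : SimpleGraph V) [DecidableRel G.Adj] (hconn : G.Connected)
    (c : Sym2 V → ℝ) (hc : ∀ e ∈ G.edgeFinset, 0 ≤ c e)
    (heven : Even (Fintype.card V))
    (T : SimpleGraph V) [DecidableRel T.Adj] (hT : T.IsTree) (α : Sym2 V → ℝ)
    (hGH : ∀ f ∈ T.edgeFinset, ∀ Wf : Finset V, edgesCut T.edgeFinset Wf = {f} →
      wSum c (edgesCut G.edgeFinset Wf) = α f ∧
      ∀ S : Finset V, (∃ a b : V, f = s(a, b) ∧ a ∈ S ∧ b ∉ S) →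
        α f ≤ wSum c (edgesCut G.edgeFinset S)) :
    ∃ f ∈ T.edgeFinset, ∃ Wf : Finset V,
      edgesCut T.edgeFinset Wf = {f} ∧ Odd Wf.card ∧ Odd Wfᶜ.card ∧
      ∀ S : Finset V, Odd S.card →
        wSum c (edgesCut G.edgeFinset Wf) ≤ wSum c (edgesCut G.edgeFinset S) := by
  classical
  obtain ⟨v0⟩ : Nonempty V := hconn.nonempty
  obtain ⟨S, hSmem, hSmin⟩ :=
    ((univ : Finset (Finset V)).filter (fun S => Odd S.card)).exists_min_image
      (fun S => wSum c (edgesCut G.edgeFinset S)) ⟨{v0}, by simp⟩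
  rw [mem_filter] at hSmem
  have hSodd : Odd S.card := hSmem.2
  have hSne : S ≠ univ := by
    intro h
    rw [h, card_univ] at hSodd
    exact (Nat.not_odd_iff_even.mpr heven) hSodd
  have hcompl : Sᶜ.Nonempty := by
    rw [Finset.nonempty_iff_ne_empty]
    intro h
    exact hSne (by rwa [Finset.compl_eq_empty_iff] at h)
  obtain ⟨r, hr⟩ := hcompl
  rw [Finset.mem_compl] at hr
  set δ := edgesCut T.edgeFinset S with hδ
  -- per-vertex parity of separating crossing edges
  have key : ∀ v : V,
      (((δ.filter (fun f => ¬ (T.deleteEdges {f}).Reachable r v)).card : ZMod 2))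
        = if v ∈ S then 1 else 0 := by
    intro v
    obtain ⟨p, hp, -⟩ := hT.existsUnique_path r v
    have hfeq : δ.filter (fun f => ¬ (T.deleteEdges {f}).Reachable r v)
        = δ.filter (fun f => f ∈ p.edges) := by
      apply Finset.filter_congr
      intro f hf
      exact (GHAux.mem_path_edges_iff hT hp).symm
    have hlist : δ.filter (fun f => f ∈ p.edges)
        = (p.edges.filter (fun e => decide (GHAux.Cross S e))).toFinset := by
      ext e
      simp only [hδ, edgesCut, Finset.mem_filter, List.mem_toFinset, List.mem_filter,
        decide_eq_true_eq, SimpleGraph.mem_edgeFinset]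
      constructor
      · rintro ⟨⟨heT, hcr⟩, hep⟩
        exact ⟨hep, hcr⟩
      · rintro ⟨hep, hcr⟩
        exact ⟨⟨p.edges_subset_edgeSet hep, hcr⟩, hep⟩
    have hnd : (p.edges.filter (fun e => decide (GHAux.Cross S e))).Nodup :=
      hp.edges_nodup.filter _
    rw [hfeq, hlist, List.card_toFinset, hnd.dedup, ← List.countP_eq_length_filter,
      GHAux.countP_cross_parity S p]
    simp [hr]
  have hsum1 : ∑ v : V,
      (((δ.filter (fun f => ¬ (T.deleteEdges {f}).Reachable r v)).card : ZMod 2)) = 1 := by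
    rw [Finset.sum_congr rfl (fun v _ => key v), Finset.sum_boole]
    have huniv : univ.filter (fun v => v ∈ S) = S := by ext x; simp
    rw [huniv]
    exact GHAux.odd_cast_zmod_two _ hSodd
  have hswap : ∑ v : V,
      (((δ.filter (fun f => ¬ (T.deleteEdges {f}).Reachable r v)).card : ZMod 2))
      = ∑ f ∈ δ, (((univ.filter
          (fun v => ¬ (T.deleteEdges {f}).Reachable r v)).card : ZMod 2)) := by
    simp only [Finset.card_filter]
    push_cast
    rw [Finset.sum_comm]
  have hex : ∃ f ∈ δ, Odd ((univ.filter
      (fun v => ¬ (T.deleteEdges {f}).Reachable r v)).card) := by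
    by_contra hcon
    push_neg at hcon
    have hz : ∀ f ∈ δ, (((univ.filter
        (fun v => ¬ (T.deleteEdges {f}).Reachable r v)).card : ZMod 2)) = 0 := fun f hf =>
      GHAux.even_cast_zmod_two _ (Nat.not_odd_iff_even.mp (hcon f hf))
    rw [hswap, Finset.sum_congr rfl hz, Finset.sum_const_zero] at hsum1
    exact one_ne_zero hsum1.symm
  obtain ⟨f, hfδ, hWodd⟩ := hex
  have hfδ' := hfδ
  rw [hδ, edgesCut, mem_filter] at hfδ'
  obtain ⟨hfT, a, b, hfab, haS, hbS⟩ := hfδ'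
  set W := univ.filter (fun v => ¬ (T.deleteEdges {f}).Reachable r v) with hW
  have hmemW : ∀ v, v ∈ W ↔ ¬ (T.deleteEdges {f}).Reachable r v := by
    intro v; rw [hW, mem_filter]; simp
  have hadj : T.Adj a b := by
    rw [← SimpleGraph.mem_edgeSet T, ← hfab]
    exact SimpleGraph.mem_edgeFinset.mp hfT
  have hbridge : ¬ (T.deleteEdges {f}).Reachable a b := by
    have hbr : T.IsBridge f :=
      (SimpleGraph.isAcyclic_iff_forall_edge_isBridge.mp hT.IsAcyclic)
        (SimpleGraph.mem_edgeFinset.mp hfT)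
    rw [hfab] at hbr ⊢
    exact SimpleGraph.isBridge_iff.mp hbr
  have hor : (T.deleteEdges {f}).Reachable a r ∨ (T.deleteEdges {f}).Reachable b r := by
    rw [hfab]
    exact GHAux.reachable_endpoint hT.isConnected hadj r
  have hone : (a ∈ W ∧ b ∉ W) ∨ (b ∈ W ∧ a ∉ W) := by
    rcases hor with h | h
    · refine Or.inr ⟨?_, ?_⟩
      · rw [hmemW]
        intro hrb
        exact hbridge (h.symm.symm.trans hrb |> fun _ => h.trans hrb)
      · rw [hmemW]
        exact fun hn => hn h.symm
    · refine Or.inl ⟨?_, ?_⟩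
      · rw [hmemW]
        intro hra
        exact hbridge (hra.symm.trans h.symm)
      · rw [hmemW]
        exact fun hn => hn h.symm
  have hcut : edgesCut T.edgeFinset W = {f} := by
    ext e
    simp only [edgesCut, mem_filter, Finset.mem_singleton]
    constructor
    · rintro ⟨heT, x, y, rfl, hx, hy⟩
      by_contra hne
      have hexy : (T.deleteEdges {f}).Adj x y := by
        rw [SimpleGraph.deleteEdges_adj]
        exact ⟨(SimpleGraph.mem_edgeSet T).mp (SimpleGraph.mem_edgeFinset.mp heT),
          by simpa using hne⟩
      rw [hmemW] at hx
      have hry : (T.deleteEdges {f}).Reachable r y := by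
        by_contra hnry
        exact hy ((hmemW y).mpr hnry)
      exact hx (hry.trans hexy.reachable.symm)
    · rintro rfl
      refine ⟨hfT, ?_⟩
      rcases hone with ⟨h1, h2⟩ | ⟨h1, h2⟩
      · exact ⟨a, b, hfab, h1, h2⟩
      · exact ⟨b, a, by rw [hfab]; exact Sym2.eq_swap, h1, h2⟩
  have hWc : Odd Wᶜ.card := by
    rw [Finset.card_compl]
    exact Nat.Even.sub_odd (Finset.card_le_univ W) heven hWodd
  refine ⟨f, hfT, W, hcut, hWodd, hWc, ?_⟩
  intro S' hS'
  obtain ⟨h1, h2⟩ := hGH f hfT W hcut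
  have h3 : α f ≤ wSum c (edgesCut G.edgeFinset S) := h2 S ⟨a, b, hfab, haS, hbS⟩
  have h4 := hSmin S' (by rw [mem_filter]; exact ⟨mem_univ _, hS'⟩)
  rw [h1]
  exact le_trans h3 h4
end

section
/- Let G be a finite undirected graph with a Gomory–Hu tree T. For any two vertices u, v, let f* = (s,t) be an edge of minimum capacity α(f*) on the unique u–v path in T. Then the bipartition of vertices given by the two components of T \ f* is a minimum-capacity u–v cut in G, and its capacity equals α(f*). -/
open Finset

lemma mem_edgesCut {V : Type*} [Fintype V] [DecidableEq V] {E : Finset (Sym2 V)} {S : Finset V}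
    {e : Sym2 V} : e ∈ edgesCut E S ↔ e ∈ E ∧ ∃ a b : V, e = s(a, b) ∧ a ∈ S ∧ b ∉ S :=
  Finset.mem_filter

-- edges not in cut preserve side
lemma same_side {V : Type*} [Fintype V] [DecidableEq V] {T : SimpleGraph V} [DecidableRel T.Adj]
    {Wf : Finset V} {f : Sym2 V} (hcut : edgesCut T.edgeFinset Wf = {f})
    {x w : V} (hxw : T.Adj x w) (hne : s(x, w) ≠ f) : (x ∈ Wf ↔ w ∈ Wf) := by
  have hmem : s(x, w) ∉ edgesCut T.edgeFinset Wf := by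
    rw [hcut]; simpa using hne
  rw [mem_edgesCut] at hmem
  push_neg at hmem
  have hE : s(x, w) ∈ T.edgeFinset := by
    rw [SimpleGraph.mem_edgeFinset]; exact hxw
  have h1 := hmem hE x w rfl
  have h2 := hmem hE w x (Sym2.eq_swap)
  tauto

lemma walk_same_side {V : Type*} [Fintype V] [DecidableEq V] {T : SimpleGraph V} [DecidableRel T.Adj]
    {Wf : Finset V} {f : Sym2 V} (hcut : edgesCut T.edgeFinset Wf = {f}) :
    ∀ {x y : V} (q : T.Walk x y), f ∉ q.edges → (x ∈ Wf ↔ y ∈ Wf) := by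
  intro x y q
  induction q with
  | nil => simp
  | cons h q ih =>
    intro hfe
    rw [SimpleGraph.Walk.edges_cons, List.mem_cons] at hfe
    push_neg at hfe
    exact (same_side hcut h (Ne.symm hfe.1)).trans (ih hfe.2)

lemma walk_flip_side {V : Type*} [Fintype V] [DecidableEq V] {T : SimpleGraph V} [DecidableRel T.Adj]
    {Wf : Finset V} {f : Sym2 V} (hcut : edgesCut T.edgeFinset Wf = {f}) :
    ∀ {x y : V} (q : T.Walk x y), q.IsPath → f ∈ q.edges → (x ∈ Wf ↔ y ∉ Wf) := by
  intro x y q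
  induction q with
  | nil => simp
  | @cons x w y h q ih =>
    intro hpath hfe
    rw [SimpleGraph.Walk.edges_cons, List.mem_cons] at hfe
    by_cases hcase : s(x, w) = f
    · -- f is this edge; f not in tail since path
      have hnodup := hpath.edges_nodup
      rw [SimpleGraph.Walk.edges_cons, List.nodup_cons] at hnodup
      have hft : f ∉ q.edges := hcase ▸ hnodup.1
      have hwy : w ∈ Wf ↔ y ∈ Wf := walk_same_side hcut q hft
      -- f crosses
      have hfc : f ∈ edgesCut T.edgeFinset Wf := by rw [hcut]; simp
      rw [mem_edgesCut] at hfc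
      obtain ⟨_, a, b, hab, haW, hbW⟩ := hfc
      rw [← hcase, Sym2.eq_iff] at hab
      rcases hab with ⟨rfl, rfl⟩ | ⟨rfl, rfl⟩ <;> tauto
    · have hxw := same_side hcut h hcase
      have hft : f ∈ q.edges := by tauto
      have := ih hpath.of_cons hft
      tauto

lemma walk_cross {V : Type*} [Fintype V] [DecidableEq V] {T : SimpleGraph V} [DecidableRel T.Adj]
    (S : Finset V) :
    ∀ {x y : V} (q : T.Walk x y), ¬(x ∈ S ↔ y ∈ S) →
      ∃ g ∈ q.edges, ∃ a b : V, g = s(a, b) ∧ T.Adj a b ∧ a ∈ S ∧ b ∉ S := by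
  intro x y q
  induction q with
  | nil => tauto
  | @cons x w y h q ih =>
    intro hsep
    by_cases hxw : x ∈ S ↔ w ∈ S
    · obtain ⟨g, hg, rest⟩ := ih (by tauto)
      exact ⟨g, by simp [hg], rest⟩
    · by_cases hxS : x ∈ S
      · exact ⟨s(x, w), by simp, x, w, rfl, h, hxS, by tauto⟩
      · exact ⟨s(x, w), by simp, w, x, Sym2.eq_swap, h.symm, by tauto, hxS⟩

open Classical in
lemma exists_tree_cut {V : Type*} [Fintype V] [DecidableEq V] {T : SimpleGraph V} [DecidableRel T.Adj]
    (hT : T.IsAcyclic) {a b : V} (hab : T.Adj a b) :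
    ∃ Wg : Finset V, edgesCut T.edgeFinset Wg = {s(a, b)} := by
  classical
  set T' := T \ SimpleGraph.fromEdgeSet {s(a, b)} with hT'
  refine ⟨Finset.univ.filter (fun x => T'.Reachable a x), ?_⟩
  have hmemW : ∀ x : V, x ∈ Finset.univ.filter (fun x => T'.Reachable a x) ↔ T'.Reachable a x := by
    intro x; simp
  have hbr : ¬ T'.Reachable a b := by
    have := (SimpleGraph.isAcyclic_iff_forall_adj_isBridge.mp hT hab)
    rw [SimpleGraph.isBridge_iff] at this
    exact this
  ext e
  rw [mem_edgesCut, Finset.mem_singleton]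
  constructor
  · rintro ⟨hE, x, y, rfl, hxW, hyW⟩
    rw [hmemW] at hxW
    rw [hmemW] at hyW
    by_contra hne
    have hadj : T'.Adj x y := by
      rw [SimpleGraph.mem_edgeFinset, SimpleGraph.mem_edgeSet] at hE
      refine ⟨hE, ?_⟩
      simp only [SimpleGraph.fromEdgeSet_adj, Set.mem_singleton_iff]
      rintro ⟨h1, -⟩
      exact hne h1
    exact hyW (hxW.trans hadj.reachable)
  · rintro rfl
    refine ⟨SimpleGraph.mem_edgeFinset.mpr hab, a, b, rfl, ?_, ?_⟩
    · rw [hmemW]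
    · rw [hmemW]; exact hbr

theorem stmt14 {V : Type*} [Fintype V] [DecidableEq V]
    (G : SimpleGraph V) [DecidableRel G.Adj] (hconn : G.Connected)
    (c : Sym2 V → ℝ) (hc : ∀ e ∈ G.edgeFinset, 0 ≤ c e)
    (T : SimpleGraph V) [DecidableRel T.Adj] (hT : T.IsTree) (α : Sym2 V → ℝ)
    (hGH : ∀ f ∈ T.edgeFinset, ∀ Wf : Finset V, edgesCut T.edgeFinset Wf = {f} →
      wSum c (edgesCut G.edgeFinset Wf) = α f ∧
      ∀ S : Finset V, (∃ a b : V, f = s(a, b) ∧ a ∈ S ∧ b ∉ S) →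
        α f ≤ wSum c (edgesCut G.edgeFinset S))
    (u v : V) (p : T.Walk u v) (hp : p.IsPath)
    (f : Sym2 V) (hf : f ∈ p.edges) (hmin : ∀ g ∈ p.edges, α f ≤ α g) :
    ∀ Wf : Finset V, edgesCut T.edgeFinset Wf = {f} →
      (u ∈ Wf ↔ v ∉ Wf) ∧
      wSum c (edgesCut G.edgeFinset Wf) = α f ∧
      ∀ S : Finset V, (u ∈ S ↔ v ∉ S) →
        wSum c (edgesCut G.edgeFinset Wf) ≤ wSum c (edgesCut G.edgeFinset S) := by
  classical
  intro Wf hWf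
  have hfT : f ∈ T.edgeFinset :=
    SimpleGraph.mem_edgeFinset.mpr (p.edges_subset_edgeSet hf)
  have h1 : u ∈ Wf ↔ v ∉ Wf := walk_flip_side hWf p hp hf
  obtain ⟨h2, _⟩ := hGH f hfT Wf hWf
  refine ⟨h1, h2, ?_⟩
  intro S hS
  obtain ⟨g, hg, a, b, hgab, hadj, haS, hbS⟩ := walk_cross S p (by tauto)
  have hgT : g ∈ T.edgeFinset := SimpleGraph.mem_edgeFinset.mpr (p.edges_subset_edgeSet hg)
  obtain ⟨Wg, hWg⟩ := exists_tree_cut hT.IsAcyclic hadj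
  rw [← hgab] at hWg
  have hle := (hGH g hgT Wg hWg).2 S ⟨a, b, hgab, haS, hbS⟩
  rw [h2]
  exact le_trans (hmin g hg) hle
end
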